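/- With Δ(S) = "(" · δ(S[1]) ··· δ(S[n]) · ")"^{k+1} where δ(0) = "()", δ(1) = "((", and k = 2·rank₁(S, n): for every 1 ≤ i ≤ n, rank₁(S, i) = (excess(Δ(S), 2i+1) − 1)/2, equivalently excess(Δ(S), 2i+1) = 2·rank₁(S, i) + 1. -/
import Mathlib


/-- Number of 1s among the first `i` characters of a binary string. -/
def rank1 (S : List Bool) (i : ℕ) : ℕ := (S.take i).count true

/-- δ(0) = "()", δ(1) = "((". A parenthesis is `true` iff it is '('. -/
def δp (b : Bool) : List Bool := if b then [true, true] else [true, false]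

/-- Δ(S) = "(" · δ(S[1])···δ(S[n]) · ")"^{k+1}, where k = 2·rank₁(S,n). -/
def ΔEx (S : List Bool) : List Bool :=
  true :: (S.flatMap δp ++ List.replicate (2 * S.count true + 1) false)

/-- Open minus closed parentheses among the first `j` characters. -/
def excess (T : List Bool) (j : ℕ) : ℤ :=
  ((T.take j).count true : ℤ) - ((T.take j).count false : ℤ)

lemma take_flatMap (S : List Bool) (i : ℕ) (h : i ≤ S.length) :
    (S.flatMap δp).take (2 * i) = (S.take i).flatMap δp := by
  induction S generalizing i with
  | nil => simp at h; simp [h]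
  | cons b t ih =>
    cases i with
    | zero => simp
    | succ j =>
      have e : 2 * (j + 1) = 2 * j + 1 + 1 := by ring
      cases b <;>
        simp [δp, List.flatMap_cons, e, List.take_succ_cons,
          ih j (by simpa using h)]

lemma count_true_flatMap (L : List Bool) :
    (L.flatMap δp).count true = L.length + L.count true := by
  induction L with
  | nil => simp
  | cons b t ih => cases b <;> simp [δp, List.flatMap_cons, ih] <;> omega

lemma count_false_flatMap (L : List Bool) :
    (L.flatMap δp).count false = L.length - L.count true := by
  induction L with
  | nil => simp
  | cons b t ih =>
    have := List.count_le_length (l := t) (a := true)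
    cases b <;> simp [δp, List.flatMap_cons, ih] <;> omega

lemma length_flatMap_dp (S : List Bool) :
    (S.flatMap δp).length = 2 * S.length := by
  induction S with
  | nil => simp
  | cons b t ih =>
    rw [List.flatMap_cons, List.length_append, ih]
    cases b <;> simp [δp] <;> omega

theorem stmt3 (S : List Bool) (i : ℕ) (h1 : 1 ≤ i) (h2 : i ≤ S.length) :
    excess (ΔEx S) (2 * i + 1) = 2 * (rank1 S i : ℤ) + 1 := by
  have hlen : (S.flatMap δp).length = 2 * S.length := length_flatMap_dp S
  have htake : (ΔEx S).take (2 * i + 1) = true :: (S.take i).flatMap δp := by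
    unfold ΔEx
    rw [List.take_succ_cons, List.take_append_of_le_length (by omega),
      take_flatMap S i h2]
  have hr : rank1 S i ≤ i := by
    have := List.count_le_length (l := S.take i) (a := true)
    simpa [rank1] using this.trans (by simp)
  unfold excess rank1
  rw [htake]
  simp [count_true_flatMap, count_false_flatMap, List.length_take,
    min_eq_left h2]
  have hr' : (S.take i).count true ≤ i := hr
  omega
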